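/- With β(α) defined by (1+α)^{-1/2} = ∫₀^∞ (1+β/u)^{-1/2} k_λ(u) du, one has lim_{α→∞} (β(α)/α)^{1/2} = E(√U) = (2/λ)^{1/2} Γ((λ+1)/2)/Γ(λ/2), where U ~ Gamma(λ/2, rate λ/2). -/

import Mathlib

open MeasureTheory Real Set Filter
open scoped Topology

/-- Gamma(shape l/2, rate l/2) density (on `(0,∞)`). -/
noncomputable def gammaPdf (l u : ℝ) : ℝ :=
  ((l / 2) ^ (l / 2) / Real.Gamma (l / 2)) * u ^ (l / 2 - 1) * Real.exp (-(l * u / 2))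

section aux

lemma aux_int {l : ℝ} (hl : 0 < l) (s : ℝ) (hs : -1 < s) :
    IntegrableOn (fun u : ℝ => u ^ s * Real.exp (-(l * u / 2))) (Ioi 0) := by
  have h := integrableOn_rpow_mul_exp_neg_mul_rpow (p := 1) (s := s) (b := l / 2) hs one_pos
    (by positivity)
  refine h.congr_fun (fun x hx => ?_) measurableSet_Ioi
  beta_reduce
  rw [Real.rpow_one]
  ring_nf

lemma gammaPdf_meas (l : ℝ) : Measurable (gammaPdf l) := by
  unfold gammaPdf
  exact (measurable_const.mul (measurable_id.pow_const _)).mul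
    (((measurable_id.const_mul l).div_const 2).neg.exp)

lemma gammaPdf_int {l : ℝ} (hl : 0 < l) : IntegrableOn (gammaPdf l) (Ioi 0) := by
  have h := (aux_int hl (l / 2 - 1) (by linarith)).const_mul
    ((l / 2) ^ (l / 2) / Real.Gamma (l / 2))
  refine IntegrableOn.congr_fun h (fun x _ => ?_) measurableSet_Ioi
  unfold gammaPdf; ring

lemma gammaPdf_pos {l u : ℝ} (hl : 0 < l) (hu : 0 < u) : 0 < gammaPdf l u := by
  unfold gammaPdf
  have h1 : 0 < Real.Gamma (l / 2) := Real.Gamma_pos_of_pos (by positivity)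
  positivity

lemma sqrt_gammaPdf_int {l : ℝ} (hl : 0 < l) :
    IntegrableOn (fun u => Real.sqrt u * gammaPdf l u) (Ioi 0) := by
  have h := (aux_int hl (l / 2 - 1 / 2) (by linarith)).const_mul
    ((l / 2) ^ (l / 2) / Real.Gamma (l / 2))
  refine IntegrableOn.congr_fun h (fun x hx => ?_) measurableSet_Ioi
  have hx' : (0 : ℝ) < x := hx
  unfold gammaPdf
  rw [Real.sqrt_eq_rpow]
  rw [show (l / 2 - 1 / 2 : ℝ) = 1 / 2 + (l / 2 - 1) by ring, Real.rpow_add hx']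
  ring

lemma sqrt_gammaPdf_integral {l : ℝ} (hl : 0 < l) :
    ∫ u in Ioi (0 : ℝ), Real.sqrt u * gammaPdf l u =
      Real.sqrt (2 / l) * Real.Gamma ((l + 1) / 2) / Real.Gamma (l / 2) := by
  have h2 : (0 : ℝ) < l / 2 := by positivity
  have key : ∫ u in Ioi (0 : ℝ), u ^ ((l + 1) / 2 - 1) * Real.exp (-(l / 2 * u)) =
      (1 / (l / 2)) ^ ((l + 1) / 2) * Real.Gamma ((l + 1) / 2) :=
    integral_rpow_mul_exp_neg_mul_Ioi (by linarith) h2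
  have hG : 0 < Real.Gamma (l / 2) := Real.Gamma_pos_of_pos h2
  have step : ∫ u in Ioi (0 : ℝ), Real.sqrt u * gammaPdf l u =
      ((l / 2) ^ (l / 2) / Real.Gamma (l / 2)) *
        ((1 / (l / 2)) ^ ((l + 1) / 2) * Real.Gamma ((l + 1) / 2)) := by
    rw [← key, ← integral_const_mul]
    refine setIntegral_congr_fun measurableSet_Ioi (fun x hx => ?_)
    have hx' : (0 : ℝ) < x := hx
    unfold gammaPdf
    rw [Real.sqrt_eq_rpow,
      show ((l + 1) / 2 - 1 : ℝ) = 1 / 2 + (l / 2 - 1) by ring, Real.rpow_add hx']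
    rw [show (-(l / 2 * x) : ℝ) = -(l * x / 2) by ring]
    ring
  rw [step]
  have h1 : ((l / 2) ^ (l / 2 : ℝ)) * (1 / (l / 2)) ^ ((l + 1) / 2 : ℝ) =
      Real.sqrt (2 / l) := by
    rw [one_div, Real.inv_rpow h2.le, ← Real.rpow_neg h2.le, ← Real.rpow_add h2,
      Real.sqrt_eq_rpow, show (2 / l : ℝ) = (l / 2)⁻¹ by rw [inv_div],
      Real.inv_rpow h2.le, ← Real.rpow_neg h2.le]
    congr 1
    ring
  calc ((l / 2) ^ (l / 2) / Real.Gamma (l / 2)) *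
        ((1 / (l / 2)) ^ ((l + 1) / 2) * Real.Gamma ((l + 1) / 2))
      = ((l / 2) ^ (l / 2 : ℝ) * (1 / (l / 2)) ^ ((l + 1) / 2 : ℝ)) *
          Real.Gamma ((l + 1) / 2) / Real.Gamma (l / 2) := by ring
    _ = _ := by rw [h1]

lemma integrand_meas (l b : ℝ) :
    Measurable (fun u : ℝ => (1 + b / u) ^ (-(1 / 2 : ℝ)) * gammaPdf l u) :=
  (((measurable_const.div measurable_id).const_add 1).pow_const _).mul (gammaPdf_meas l)

lemma integrand_int {l b : ℝ} (hl : 0 < l) (hb : 0 ≤ b) :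
    IntegrableOn (fun u : ℝ => (1 + b / u) ^ (-(1 / 2 : ℝ)) * gammaPdf l u) (Ioi 0) := by
  refine Integrable.mono' (gammaPdf_int hl) ((integrand_meas l b).aestronglyMeasurable) ?_
  filter_upwards [self_mem_ae_restrict measurableSet_Ioi] with u hu
  have hu' : (0 : ℝ) < u := hu
  have h1 : (1 : ℝ) ≤ 1 + b / u := by
    have : 0 ≤ b / u := by positivity
    linarith
  have h0 : (0 : ℝ) < 1 + b / u := by linarith
  have hle : (1 + b / u) ^ (-(1 / 2 : ℝ)) ≤ 1 := by
    calc (1 + b / u) ^ (-(1 / 2 : ℝ)) ≤ (1 : ℝ) ^ (-(1 / 2 : ℝ)) :=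
          Real.rpow_le_rpow_of_nonpos one_pos h1 (by norm_num)
      _ = 1 := Real.one_rpow _
  have hk := gammaPdf_pos hl hu'
  rw [Real.norm_eq_abs, abs_of_nonneg (by positivity)]
  calc (1 + b / u) ^ (-(1 / 2 : ℝ)) * gammaPdf l u ≤ 1 * gammaPdf l u := by
        apply mul_le_mul_of_nonneg_right hle hk.le
    _ = gammaPdf l u := one_mul _

lemma integral_pos {l b : ℝ} (hl : 0 < l) (hb : 0 ≤ b) :
    0 < ∫ u in Ioi (0 : ℝ), (1 + b / u) ^ (-(1 / 2 : ℝ)) * gammaPdf l u := by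
  have hpos : ∀ u ∈ Ioi (0 : ℝ), 0 < (1 + b / u) ^ (-(1 / 2 : ℝ)) * gammaPdf l u := by
    intro u hu
    have hu' : (0 : ℝ) < u := hu
    have h0 : (0 : ℝ) < 1 + b / u := by
      have : 0 ≤ b / u := by positivity
      linarith
    exact mul_pos (Real.rpow_pos_of_pos h0 _) (gammaPdf_pos hl hu')
  have hnn : 0 ≤ᵐ[volume.restrict (Ioi (0:ℝ))]
      (fun u : ℝ => (1 + b / u) ^ (-(1 / 2 : ℝ)) * gammaPdf l u) := by
    filter_upwards [self_mem_ae_restrict measurableSet_Ioi] with u hu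
    exact (hpos u hu).le
  rw [setIntegral_pos_iff_support_of_nonneg_ae hnn (integrand_int hl hb)]
  have hsub : Ioi (0 : ℝ) ⊆ Function.support
      (fun u : ℝ => (1 + b / u) ^ (-(1 / 2 : ℝ)) * gammaPdf l u) :=
    fun u hu => (hpos u hu).ne'
  rw [Set.inter_eq_right.mpr hsub, volume_Ioi]
  simp

lemma integral_antitone {l b₁ b₂ : ℝ} (hl : 0 < l) (hb₁ : 0 ≤ b₁) (hb : b₁ ≤ b₂) :
    ∫ u in Ioi (0 : ℝ), (1 + b₂ / u) ^ (-(1 / 2 : ℝ)) * gammaPdf l u ≤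
      ∫ u in Ioi (0 : ℝ), (1 + b₁ / u) ^ (-(1 / 2 : ℝ)) * gammaPdf l u := by
  refine setIntegral_mono_on (integrand_int hl (hb₁.trans hb)) (integrand_int hl hb₁)
    measurableSet_Ioi (fun u hu => ?_)
  have hu' : (0 : ℝ) < u := hu
  have h0 : (0 : ℝ) < 1 + b₁ / u := by
    have : 0 ≤ b₁ / u := by positivity
    linarith
  refine mul_le_mul_of_nonneg_right ?_ (gammaPdf_pos hl hu').le
  exact Real.rpow_le_rpow_of_nonpos h0 (by gcongr) (by norm_num)

/-- Algebraic identity: `√b * (1+b/u)^{-1/2} = √(b/(1+b/u))` for `u > 0`, `b ≥ 0`. -/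
lemma sqrt_mul_rpow {b u : ℝ} (hu : 0 < u) (hb : 0 ≤ b) :
    Real.sqrt b * (1 + b / u) ^ (-(1 / 2 : ℝ)) = Real.sqrt (b / (1 + b / u)) := by
  have h0 : (0 : ℝ) < 1 + b / u := by
    have : 0 ≤ b / u := by positivity
    linarith
  rw [Real.sqrt_div hb, Real.rpow_neg h0.le, ← Real.sqrt_eq_rpow]
  exact (div_eq_mul_inv _ _).symm

lemma div_le_self' {b u : ℝ} (hu : 0 < u) (hb : 0 ≤ b) : b / (1 + b / u) ≤ u := by
  have h0 : (0 : ℝ) < 1 + b / u := by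
    have : 0 ≤ b / u := by positivity
    linarith
  rw [div_le_iff₀ h0]
  have : u * (1 + b / u) = u + b := by field_simp
  rw [this]
  linarith

lemma tendsto_div_one_add (u : ℝ) (hu : 0 < u) :
    Tendsto (fun b : ℝ => b / (1 + b / u)) atTop (𝓝 u) := by
  have h1 : Tendsto (fun b : ℝ => (b⁻¹ + u⁻¹)⁻¹) atTop (𝓝 u) := by
    have h2 : Tendsto (fun b : ℝ => b⁻¹ + u⁻¹) atTop (𝓝 (0 + u⁻¹)) :=
      tendsto_inv_atTop_zero.add tendsto_const_nhds
    have h3 := h2.inv₀ (by simp [hu.ne'])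
    simpa [hu.ne'] using h3
  refine h1.congr' ?_
  filter_upwards [eventually_gt_atTop 0] with b hb
  have h0 : (0 : ℝ) < 1 + b / u := by positivity
  field_simp

/-- Dominated convergence: the key limit. -/
lemma tendsto_main {l : ℝ} (hl : 0 < l) :
    Tendsto (fun b : ℝ => ∫ u in Ioi (0 : ℝ),
        Real.sqrt b * ((1 + b / u) ^ (-(1 / 2 : ℝ)) * gammaPdf l u)) atTop
      (𝓝 (∫ u in Ioi (0 : ℝ), Real.sqrt u * gammaPdf l u)) := by
  refine tendsto_integral_filter_of_dominated_convergence
    (fun u => Real.sqrt u * gammaPdf l u) ?_ ?_ (sqrt_gammaPdf_int hl) ?_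
  · filter_upwards with b
    exact (((integrand_meas l b).const_mul _).aestronglyMeasurable)
  · filter_upwards [eventually_ge_atTop (0 : ℝ)] with b hb
    filter_upwards [self_mem_ae_restrict measurableSet_Ioi] with u hu
    have hu' : (0 : ℝ) < u := hu
    have h0 : (0 : ℝ) < 1 + b / u := by
      have : 0 ≤ b / u := by positivity
      linarith
    have hk := gammaPdf_pos hl hu'
    rw [Real.norm_eq_abs, abs_of_nonneg (by positivity), ← mul_assoc, sqrt_mul_rpow hu' hb]
    refine mul_le_mul_of_nonneg_right ?_ hk.le
    exact Real.sqrt_le_sqrt (div_le_self' hu' hb)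
  · filter_upwards [self_mem_ae_restrict measurableSet_Ioi] with u hu
    have hu' : (0 : ℝ) < u := hu
    have h1 : Tendsto (fun b : ℝ => Real.sqrt (b / (1 + b / u)) * gammaPdf l u) atTop
        (𝓝 (Real.sqrt u * gammaPdf l u)) :=
      ((Real.continuous_sqrt.continuousAt.tendsto.comp (tendsto_div_one_add u hu'))).mul_const _
    refine h1.congr' ?_
    filter_upwards [eventually_ge_atTop (0 : ℝ)] with b hb
    rw [← mul_assoc, sqrt_mul_rpow hu' hb]

end aux

theorem stmt13 (l : ℝ) (hl : 0 < l) (β : ℝ → ℝ)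
    (hβ : ∀ α : ℝ, 0 < α → 0 < β α ∧
      (1 + α) ^ (-(1 / 2 : ℝ)) =
        ∫ u in Set.Ioi (0 : ℝ), (1 + β α / u) ^ (-(1 / 2 : ℝ)) * gammaPdf l u) :
    Tendsto (fun α : ℝ => Real.sqrt (β α / α)) atTop
      (nhds (Real.sqrt (2 / l) * Real.Gamma ((l + 1) / 2) / Real.Gamma (l / 2))) := by
  -- (1+α)^{-1/2} → 0
  have hto0 : Tendsto (fun α : ℝ => (1 + α) ^ (-(1 / 2 : ℝ))) atTop (𝓝 0) := by
    have h1 : Tendsto (fun α : ℝ => 1 + α) atTop atTop :=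
      tendsto_atTop_add_const_left _ 1 tendsto_id
    exact (tendsto_rpow_neg_atTop (by norm_num : (0:ℝ) < 1/2)).comp h1
  -- β → ∞
  have hβtop : Tendsto β atTop atTop := by
    rw [tendsto_atTop]
    intro M
    set M' : ℝ := max M 0 with hM'def
    have hM0 : 0 ≤ M' := le_max_right _ _
    have hIpos := integral_pos hl hM0
    filter_upwards [hto0.eventually_lt_const hIpos, eventually_gt_atTop (0 : ℝ)]
      with α hα hα0
    obtain ⟨hβpos, heq⟩ := hβ α hα0
    by_contra hcon
    push_neg at hcon
    have hle : β α ≤ M' := le_trans hcon.le (le_max_left _ _)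
    have := integral_antitone hl hβpos.le hle
    rw [← heq] at this
    linarith
  -- the key limit composed with β
  have hTend : Tendsto (fun α : ℝ => ∫ u in Ioi (0 : ℝ),
      Real.sqrt (β α) * ((1 + β α / u) ^ (-(1 / 2 : ℝ)) * gammaPdf l u)) atTop
      (𝓝 (Real.sqrt (2 / l) * Real.Gamma ((l + 1) / 2) / Real.Gamma (l / 2))) := by
    rw [← sqrt_gammaPdf_integral hl]
    exact (tendsto_main hl).comp hβtop
  -- √((1+α)/α) → 1
  have hsq1 : Tendsto (fun α : ℝ => Real.sqrt ((1 + α) / α)) atTop (𝓝 1) := by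
    have h1 : Tendsto (fun α : ℝ => (1 + α) / α) atTop (𝓝 1) := by
      have h2 : Tendsto (fun α : ℝ => α⁻¹ + 1) atTop (𝓝 (0 + 1)) :=
        tendsto_inv_atTop_zero.add tendsto_const_nhds
      rw [zero_add] at h2
      refine h2.congr' ?_
      filter_upwards [eventually_gt_atTop (0 : ℝ)] with α hα
      field_simp
    have := (Real.continuous_sqrt.continuousAt (x := (1:ℝ))).tendsto.comp h1
    simpa [Function.comp_def] using this
  have hmain : Tendsto (fun α : ℝ => (∫ u in Ioi (0 : ℝ),
      Real.sqrt (β α) * ((1 + β α / u) ^ (-(1 / 2 : ℝ)) * gammaPdf l u)) *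
        Real.sqrt ((1 + α) / α)) atTop
      (𝓝 (Real.sqrt (2 / l) * Real.Gamma ((l + 1) / 2) / Real.Gamma (l / 2))) := by
    have := hTend.mul hsq1
    simpa using this
  refine hmain.congr' ?_
  filter_upwards [eventually_gt_atTop (0 : ℝ)] with α hα
  obtain ⟨hβpos, heq⟩ := hβ α hα
  have hI : (∫ u in Ioi (0 : ℝ),
      Real.sqrt (β α) * ((1 + β α / u) ^ (-(1 / 2 : ℝ)) * gammaPdf l u)) =
      Real.sqrt (β α) * (1 + α) ^ (-(1 / 2 : ℝ)) := by
    rw [integral_const_mul, ← heq]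
  rw [hI]
  have h1α : (0 : ℝ) < 1 + α := by linarith
  have hs2 : Real.sqrt (1 + α) ≠ 0 := (Real.sqrt_pos.mpr h1α).ne'
  have hs3 : Real.sqrt α ≠ 0 := (Real.sqrt_pos.mpr hα).ne'
  rw [Real.rpow_neg h1α.le, ← Real.sqrt_eq_rpow, Real.sqrt_div h1α.le,
    Real.sqrt_div hβpos.le]
  field_simp
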